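/- (Lemma 2, first part.) Let {G_k}_{k≥0} be a B-strongly connected sequence of directed graphs on n nodes, each containing all self-loops, with associated column-stochastic weight matrices {A_k}, and define δ = inf_{k≥0} min_{1≤i≤n} [A_{k:0} 𝟏_n]_i where 𝟏_n is the all-ones vector. Then δ ≥ 1/n^{nB}. -/

import Mathlib

open Finset Matrix

/-- Number of out-neighbors of `j` other than itself, in the digraph with edge set `E`. -/
def outDeg {n : ℕ} (E : Finset (Fin n × Fin n)) (j : Fin n) : ℕ :=
  (Finset.univ.filter fun i => (j, i) ∈ E ∧ i ≠ j).card

/-- Number of in-neighbors of `j` other than itself, in the digraph with edge set `E`. -/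
def inDeg {n : ℕ} (E : Finset (Fin n × Fin n)) (j : Fin n) : ℕ :=
  (Finset.univ.filter fun i => (i, j) ∈ E ∧ i ≠ j).card

/-- The column-stochastic weight matrix associated with the edge set `E`:
`A i j = 1/(d_j + 1)` if `(j,i) ∈ E` and `0` otherwise. -/
noncomputable def weightMatrix {n : ℕ} (E : Finset (Fin n × Fin n)) :
    Matrix (Fin n) (Fin n) ℝ :=
  Matrix.of fun i j => if (j, i) ∈ E then 1 / (outDeg E j + 1) else 0

/-- `prodA A t m = A (t+m) * A (t+m-1) * ⋯ * A t`, i.e. the backward product `A_{(t+m):t}`. -/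
noncomputable def prodA {n : ℕ} (A : ℕ → Matrix (Fin n) (Fin n) ℝ) (t : ℕ) :
    ℕ → Matrix (Fin n) (Fin n) ℝ
  | 0 => A t
  | m + 1 => A (t + m + 1) * prodA A t m

/-- The digraph on `Fin n` with edge set `E` is strongly connected. -/
def StronglyConnected {n : ℕ} (E : Finset (Fin n × Fin n)) : Prop :=
  ∀ i j : Fin n, Relation.ReflTransGen (fun a b => (a, b) ∈ E) i j

/-- The graph sequence `E` is `B`-strongly connected. -/
def BStronglyConnected {n : ℕ} (E : ℕ → Finset (Fin n × Fin n)) (B : ℕ) : Prop :=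
  ∀ k : ℕ, StronglyConnected ((Finset.Ico (k * B) ((k + 1) * B)).biUnion E)

section Aux
variable {n : ℕ}

lemma weight_nonneg (E : Finset (Fin n × Fin n)) (i j : Fin n) :
    0 ≤ weightMatrix E i j := by
  unfold weightMatrix
  simp only [Matrix.of_apply]
  split
  · positivity
  · exact le_refl 0

lemma outDeg_lt (E : Finset (Fin n × Fin n)) (j : Fin n) : outDeg E j < n := by
  have h : (Finset.univ.filter fun i => (j, i) ∈ E ∧ i ≠ j) ⊆ Finset.univ.erase j := by
    intro x hx
    simp only [Finset.mem_filter] at hx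
    exact Finset.mem_erase.2 ⟨hx.2.2, Finset.mem_univ x⟩
  have := Finset.card_le_card h
  rw [Finset.card_erase_of_mem (Finset.mem_univ j), Finset.card_univ, Fintype.card_fin] at this
  have hn : 0 < n := j.pos
  unfold outDeg
  omega

lemma weight_ge (E : Finset (Fin n × Fin n)) {i j : Fin n} (h : (j, i) ∈ E) :
    1 / (n : ℝ) ≤ weightMatrix E i j := by
  unfold weightMatrix
  simp only [Matrix.of_apply, if_pos h]
  apply one_div_le_one_div_of_le
  · positivity
  · have := outDeg_lt E j
    exact_mod_cast Nat.succ_le_of_lt this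



lemma card_out (E : Finset (Fin n × Fin n)) (j : Fin n) (hl : (j, j) ∈ E) :
    (Finset.univ.filter fun i => (j, i) ∈ E).card = outDeg E j + 1 := by
  have hset : (Finset.univ.filter fun i => (j, i) ∈ E)
      = insert j (Finset.univ.filter fun i => (j, i) ∈ E ∧ i ≠ j) := by
    ext x
    simp only [Finset.mem_filter, Finset.mem_insert, Finset.mem_univ, true_and]
    by_cases hx : x = j
    · subst hx; simp [hl]
    · simp [hx]
  rw [hset, Finset.card_insert_of_notMem (by simp)]
  rfl

lemma colsum (E : Finset (Fin n × Fin n)) (j : Fin n) (hl : (j, j) ∈ E) :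
    ∑ i, weightMatrix E i j = 1 := by
  unfold weightMatrix
  simp only [Matrix.of_apply]
  rw [← Finset.sum_filter, Finset.sum_const, card_out E j hl, nsmul_eq_mul]
  have : ((outDeg E j : ℝ) + 1) ≠ 0 := by positivity
  push_cast
  field_simp

variable {A : ℕ → Matrix (Fin n) (Fin n) ℝ} {E : ℕ → Finset (Fin n × Fin n)}

lemma prodA_nonneg (hA : ∀ k, A k = weightMatrix (E k)) (t m : ℕ) (i j : Fin n) :
    0 ≤ prodA A t m i j := by
  induction m generalizing i j with
  | zero => rw [prodA, hA]; exact weight_nonneg _ i j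
  | succ m ih =>
    rw [prodA, Matrix.mul_apply]
    apply Finset.sum_nonneg
    intro x _
    have : 0 ≤ A (t + m + 1) i x := by rw [hA]; exact weight_nonneg _ i x
    exact mul_nonneg this (ih x j)

lemma prodA_colsum (hA : ∀ k, A k = weightMatrix (E k)) (hl : ∀ k i, (i, i) ∈ E k)
    (t m : ℕ) (j : Fin n) : ∑ i, prodA A t m i j = 1 := by
  induction m with
  | zero => rw [prodA]; simp only [hA]; exact colsum _ j (hl t j)
  | succ m ih =>
    rw [prodA]
    simp only [Matrix.mul_apply]
    rw [Finset.sum_comm]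
    have : ∀ x : Fin n, ∑ i, A (t + m + 1) i x * prodA A t m x j
        = prodA A t m x j := by
      intro x
      rw [← Finset.sum_mul]
      have : ∑ i, A (t + m + 1) i x = 1 := by
        simp only [hA]; exact colsum _ x (hl _ x)
      rw [this, one_mul]
    simp only [this]
    exact ih

lemma prodA_split (t m₁ m₂ : ℕ) :
    prodA A t (m₁ + m₂ + 1) = prodA A (t + m₁ + 1) m₂ * prodA A t m₁ := by
  induction m₂ with
  | zero => rw [prodA, prodA]
  | succ m₂ ih =>
    have h1 : m₁ + (m₂ + 1) + 1 = (m₁ + m₂ + 1) + 1 := by ring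
    have h2 : t + (m₁ + m₂ + 1) + 1 = (t + m₁ + 1) + m₂ + 1 := by ring
    rw [h1, prodA, ih, prodA, h2, Matrix.mul_assoc]

open Classical in
/-- Nodes reachable from `j0` along the time-varying graph over times `t, t+1, …, t+m`. -/
noncomputable def reachSet (E : ℕ → Finset (Fin n × Fin n)) (t : ℕ) (j0 : Fin n) :
    ℕ → Finset (Fin n)
  | 0 => Finset.univ.filter fun i => (j0, i) ∈ E t
  | m + 1 => Finset.univ.filter fun i => ∃ l ∈ reachSet E t j0 m, (l, i) ∈ E (t + m + 1)

lemma mem_reachSet_succ {t m : ℕ} {j0 l i : Fin n}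
    (hl : l ∈ reachSet E t j0 m) (he : (l, i) ∈ E (t + m + 1)) :
    i ∈ reachSet E t j0 (m + 1) := by
  rw [reachSet]
  simp only [Finset.mem_filter, Finset.mem_univ, true_and]
  exact ⟨l, hl, he⟩

lemma reachSet_mono_succ (hl : ∀ k i, (i, i) ∈ E k) (t m : ℕ) (j0 : Fin n) :
    reachSet E t j0 m ⊆ reachSet E t j0 (m + 1) :=
  fun x hx => mem_reachSet_succ hx (hl _ x)

lemma reachSet_mono (hl : ∀ k i, (i, i) ∈ E k) (t : ℕ) (j0 : Fin n) {m m' : ℕ}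
    (h : m ≤ m') : reachSet E t j0 m ⊆ reachSet E t j0 m' := by
  induction m' with
  | zero => simp_all
  | succ m' ih =>
    rcases Nat.lt_or_ge m (m' + 1) with h' | h'
    · exact (ih (by omega)).trans (reachSet_mono_succ hl t m' j0)
    · have : m = m' + 1 := by omega
      subst this; exact subset_rfl

lemma self_mem_reachSet (hl : ∀ k i, (i, i) ∈ E k) (t m : ℕ) (j0 : Fin n) :
    j0 ∈ reachSet E t j0 m := by
  induction m with
  | zero =>
    rw [reachSet]
    simp only [Finset.mem_filter, Finset.mem_univ, true_and]
    exact hl t j0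
  | succ m ih => exact mem_reachSet_succ ih (hl _ j0)

lemma entry_ge (hA : ∀ k, A k = weightMatrix (E k)) {t m : ℕ} {j0 i : Fin n}
    (h : i ∈ reachSet E t j0 m) :
    (1 / (n : ℝ)) ^ (m + 1) ≤ prodA A t m i j0 := by
  induction m generalizing i with
  | zero =>
    rw [reachSet] at h
    simp only [Finset.mem_filter, Finset.mem_univ, true_and] at h
    rw [prodA, hA, pow_one]
    exact weight_ge _ h
  | succ m ih =>
    rw [reachSet] at h
    simp only [Finset.mem_filter, Finset.mem_univ, true_and] at h
    obtain ⟨l, hl, he⟩ := h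
    rw [prodA, Matrix.mul_apply]
    have hterm : (1 / (n : ℝ)) ^ (m + 2) ≤ A (t + m + 1) i l * prodA A t m l j0 := by
      have h1 : 1 / (n : ℝ) ≤ A (t + m + 1) i l := by rw [hA]; exact weight_ge _ he
      have h2 := ih hl
      calc (1 / (n : ℝ)) ^ (m + 2) = (1 / (n : ℝ)) * (1 / (n : ℝ)) ^ (m + 1) := by ring
        _ ≤ A (t + m + 1) i l * prodA A t m l j0 := by
            apply mul_le_mul h1 h2 (by positivity) ?_
            rw [hA]; exact weight_nonneg _ i l
    refine hterm.trans (Finset.single_le_sum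
      (f := fun x => A (t + m + 1) i x * prodA A t m x j0) (fun x _ => ?_) (Finset.mem_univ l))
    have : 0 ≤ A (t + m + 1) i x := by rw [hA]; exact weight_nonneg _ i x
    exact mul_nonneg this (prodA_nonneg hA t m x j0)

def StronglyConnected' {n : ℕ} (E : Finset (Fin n × Fin n)) : Prop :=
  ∀ i j : Fin n, Relation.ReflTransGen (fun a b => (a, b) ∈ E) i j

lemma cut_edge {α : Type*} {r : α → α → Prop} {S : Finset α} {a b : α}
    (h : Relation.ReflTransGen r a b) (ha : a ∈ S) (hb : b ∉ S) :
    ∃ x y, x ∈ S ∧ y ∉ S ∧ r x y := by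
  revert hb
  induction h with
  | refl => exact fun hb => absurd ha hb
  | @tail c b' hac hcb ih =>
    intro hb
    by_cases hc : c ∈ S
    · exact ⟨c, b', hc, hb, hcb⟩
    · exact ih hc

lemma grow {B : ℕ}
    (hconn : ∀ k : ℕ, StronglyConnected'
      ((Finset.Ico (k * B) ((k + 1) * B)).biUnion E))
    (hl : ∀ k i, (i, i) ∈ E k) (hB : 1 ≤ B)
    (t m q : ℕ) (j0 : Fin n) (hq : t + m + 1 ≤ q * B)
    (hne : reachSet E t j0 m ≠ Finset.univ) :
    reachSet E t j0 m ⊂ reachSet E t j0 (q * B + B - 1 - t) := by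
  set S := reachSet E t j0 m with hS
  have hsub : S ⊆ reachSet E t j0 (q * B + B - 1 - t) :=
    reachSet_mono hl t j0 (by omega)
  -- find b outside S
  obtain ⟨b, hb⟩ : ∃ b : Fin n, b ∉ S := by
    by_contra h
    push_neg at h
    exact hne (Finset.eq_univ_iff_forall.2 h)
  have ha : j0 ∈ S := self_mem_reachSet hl t m j0
  have hpath := hconn q j0 b
  obtain ⟨x, y, hx, hy, hxy⟩ := cut_edge hpath ha hb
  simp only [Finset.mem_biUnion, Finset.mem_Ico] at hxy
  obtain ⟨s, ⟨hs1, hs2⟩, hsE⟩ := hxy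
  -- y enters the reach set at offset s - t
  have hmx : x ∈ reachSet E t j0 (s - 1 - t) :=
    reachSet_mono hl t j0 (by omega) hx
  have hstep : y ∈ reachSet E t j0 (s - 1 - t + 1) := by
    apply mem_reachSet_succ hmx
    have : t + (s - 1 - t) + 1 = s := by omega
    rwa [this]
  have hy' : y ∈ reachSet E t j0 (q * B + B - 1 - t) := by
    refine reachSet_mono hl t j0 ?_ hstep
    have : (q + 1) * B = q * B + B := by ring
    omega
  exact ⟨hsub, fun hcon => hy (hcon hy')⟩

lemma reach_full {B : ℕ}
    (hconn : ∀ k : ℕ, StronglyConnected'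
      ((Finset.Ico (k * B) ((k + 1) * B)).biUnion E))
    (hl : ∀ k i, (i, i) ∈ E k) (hn : 1 ≤ n) (hB : 1 ≤ B) (t : ℕ) (j0 : Fin n) :
    reachSet E t j0 (n * B - 1) = Finset.univ := by
  have h0 : t < (t / B + 1) * B := by
    have h1 := Nat.div_add_mod t B
    have h2 : t % B < B := Nat.mod_lt _ hB
    calc t = B * (t / B) + t % B := (Nat.div_add_mod t B).symm
      _ < B * (t / B) + B := by omega
      _ = (t / B + 1) * B := by ring
  have claim : ∀ c : ℕ, min n (c + 1) ≤ (reachSet E t j0 ((t / B + 1 + c) * B - 1 - t)).card := by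
    intro c
    induction c with
    | zero =>
      have : 0 < (reachSet E t j0 ((t / B + 1 + 0) * B - 1 - t)).card :=
        Finset.card_pos.2 ⟨j0, self_mem_reachSet hl t _ j0⟩
      omega
    | succ c ih =>
      by_cases hu : reachSet E t j0 ((t / B + 1 + c) * B - 1 - t) = Finset.univ
      · have hsub : reachSet E t j0 ((t / B + 1 + c) * B - 1 - t)
            ⊆ reachSet E t j0 ((t / B + 1 + (c + 1)) * B - 1 - t) := by
          apply reachSet_mono hl
          have : (t / B + 1 + c) * B ≤ (t / B + 1 + (c + 1)) * B :=
            Nat.mul_le_mul_right _ (by omega)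
          omega
        rw [hu, Finset.univ_subset_iff] at hsub
        rw [hsub, Finset.card_univ, Fintype.card_fin]
        omega
      · have hq : t + 1 ≤ (t / B + 1 + c) * B :=
          le_trans (by omega : t + 1 ≤ (t / B + 1) * B)
            (Nat.mul_le_mul_right _ (by omega))
        have hgrow := grow hconn hl hB t ((t / B + 1 + c) * B - 1 - t) (t / B + 1 + c) j0
          (by omega) hu
        have hcard := Finset.card_lt_card hgrow
        have hexp : (t / B + 1 + c) * B + B = (t / B + 1 + (c + 1)) * B := by ring
        rw [hexp] at hcard
        have hlt : (reachSet E t j0 ((t / B + 1 + c) * B - 1 - t)).card < n := by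
          have := Finset.card_lt_card (Finset.ssubset_univ_iff.2 hu)
          rwa [Finset.card_univ, Fintype.card_fin] at this
        omega
  have hfin := claim (n - 1)
  have hcn : n ≤ (reachSet E t j0 ((t / B + 1 + (n - 1)) * B - 1 - t)).card := by omega
  have huniv : reachSet E t j0 ((t / B + 1 + (n - 1)) * B - 1 - t) = Finset.univ := by
    apply Finset.eq_univ_of_card
    have hle : (reachSet E t j0 ((t / B + 1 + (n - 1)) * B - 1 - t)).card ≤ n := by
      have := Finset.card_le_univ (reachSet E t j0 ((t / B + 1 + (n - 1)) * B - 1 - t))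
      simpa using this
    rw [Fintype.card_fin]
    omega
  have hL : (t / B) * B ≤ t := Nat.div_mul_le_self t B
  have hexp2 : (t / B + 1 + (n - 1)) * B = (t / B) * B + (1 + (n - 1)) * B := by ring
  have hexp3 : (1 + (n - 1)) * B = n * B := by
    congr 1
    omega
  have hoff : (t / B + 1 + (n - 1)) * B - 1 - t ≤ n * B - 1 := by
    rw [hexp2, hexp3]
    omega
  have := reachSet_mono (E := E) hl t j0 hoff
  rw [huniv, Finset.univ_subset_iff] at this
  exact this

lemma entry_full {B : ℕ} (hA : ∀ k, A k = weightMatrix (E k))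
    (hconn : ∀ k : ℕ, StronglyConnected'
      ((Finset.Ico (k * B) ((k + 1) * B)).biUnion E))
    (hl : ∀ k i, (i, i) ∈ E k) (hn : 1 ≤ n) (hB : 1 ≤ B) (t : ℕ) (i j : Fin n) :
    (1 / (n : ℝ)) ^ (n * B) ≤ prodA A t (n * B - 1) i j := by
  have hfull := reach_full hconn hl hn hB t j
  have hi : i ∈ reachSet E t j (n * B - 1) := hfull ▸ Finset.mem_univ i
  have h := entry_ge hA hi
  have hnb : 1 ≤ n * B := le_trans (by omega) (Nat.mul_le_mul hn hB)
  have heq : n * B - 1 + 1 = n * B := by omega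
  rwa [heq] at h

lemma key_bound {B : ℕ} (hA : ∀ k, A k = weightMatrix (E k))
    (hconn : ∀ k : ℕ, StronglyConnected'
      ((Finset.Ico (k * B) ((k + 1) * B)).biUnion E))
    (hl : ∀ k i, (i, i) ∈ E k) (hn : 1 ≤ n) (hB : 1 ≤ B) (k : ℕ) (i : Fin n) :
    (1 / (n : ℝ)) ^ (n * B) ≤ ∑ j, prodA A 0 k i j := by
  have hn1 : (1 : ℝ) / n ≤ 1 := by
    rw [div_le_one (by exact_mod_cast hn : (0:ℝ) < n)]
    exact_mod_cast hn
  have hn0 : (0 : ℝ) ≤ 1 / n := by positivity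
  rcases Nat.lt_or_ge k (n * B) with hk | hk
  · -- short products: use the diagonal entry
    have hdiag : (1 / (n : ℝ)) ^ (k + 1) ≤ prodA A 0 k i i :=
      entry_ge hA (self_mem_reachSet hl 0 k i)
    have h1 : (1 / (n : ℝ)) ^ (n * B) ≤ (1 / (n : ℝ)) ^ (k + 1) :=
      pow_le_pow_of_le_one hn0 hn1 (by omega)
    refine (h1.trans hdiag).trans ?_
    exact Finset.single_le_sum (f := fun j => prodA A 0 k i j)
      (fun j _ => prodA_nonneg hA 0 k i j) (Finset.mem_univ i)
  · -- long products: split off a fully positive block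
    have hnb : 1 ≤ n * B := le_trans (by omega) (Nat.mul_le_mul hn hB)
    obtain ⟨s, rfl⟩ : ∃ s, k = s + (n * B - 1) + 1 := ⟨k - n * B, by omega⟩
    rw [prodA_split]
    simp only [Nat.zero_add]
    have hQ : ∀ l, (1 / (n : ℝ)) ^ (n * B) ≤ prodA A (s + 1) (n * B - 1) i l :=
      fun l => entry_full hA hconn hl hn hB (s + 1) i l
    have hcol : ∀ j : Fin n, ∑ l, prodA A 0 s l j = 1 := prodA_colsum hA hl 0 s
    have hsum : ∑ j, (prodA A (s + 1) (n * B - 1) * prodA A 0 s) i j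
        = ∑ l, prodA A (s + 1) (n * B - 1) i l * ∑ j, prodA A 0 s l j := by
      simp only [Matrix.mul_apply, Finset.mul_sum]
      exact Finset.sum_comm
    rw [hsum]
    have hw : ∀ l : Fin n, (0 : ℝ) ≤ ∑ j, prodA A 0 s l j :=
      fun l => Finset.sum_nonneg fun j _ => prodA_nonneg hA 0 s l j
    have step1 : ∑ l, (1 / (n : ℝ)) ^ (n * B) * ∑ j, prodA A 0 s l j
        ≤ ∑ l, prodA A (s + 1) (n * B - 1) i l * ∑ j, prodA A 0 s l j := by
      apply Finset.sum_le_sum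
      intro l _
      exact mul_le_mul_of_nonneg_right (hQ l) (hw l)
    refine le_trans ?_ step1
    have hsc : ∑ l, ∑ j, prodA A 0 s l j = ∑ j, ∑ l, prodA A 0 s l j := Finset.sum_comm
    rw [← Finset.mul_sum, hsc]
    simp only [hcol]
    rw [Finset.sum_const, Finset.card_univ, Fintype.card_fin, nsmul_eq_mul, mul_one]
    exact le_mul_of_one_le_right (by positivity) (by exact_mod_cast hn)

end Aux

theorem delta_lower_bound
    (n B : ℕ) (hn : 1 ≤ n) (hB : 1 ≤ B)
    (E : ℕ → Finset (Fin n × Fin n)) (hloop : ∀ k i, (i, i) ∈ E k)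
    (hconn : BStronglyConnected E B)
    (A : ℕ → Matrix (Fin n) (Fin n) ℝ) (hA : ∀ k, A k = weightMatrix (E k)) :
    (⨅ k : ℕ, ⨅ i : Fin n, (prodA A 0 k *ᵥ fun _ => (1 : ℝ)) i)
      ≥ 1 / (n : ℝ) ^ (n * B) := by
  have hconn' : ∀ k : ℕ, StronglyConnected'
      ((Finset.Ico (k * B) ((k + 1) * B)).biUnion E) := hconn
  have hne : Nonempty (Fin n) := ⟨⟨0, hn⟩⟩
  rw [ge_iff_le, ← _root_.one_div_pow]
  refine le_ciInf fun k => le_ciInf fun i => ?_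
  have h := key_bound hA hconn' hloop hn hB k i
  simpa [Matrix.mulVec, dotProduct, mul_one] using h
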